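/- Let R be a commutative noetherian ring and M an R-module. Then a prime p is vaguely associated to M if and only if p is associated to M; that is, R/p lies in the smallest class containing M closed under submodules and direct limits if and only if R/p embeds into M. -/
import Mathlib


universe u

/-- `MemSubLim R M N` says that the module `N` belongs to `SubLim({M})`, the
smallest isomorphism-closed class of `R`-modules containing `M` and closed
under submodules and direct limits of directed systems. -/
def MemSubLim (R : Type u) [CommRing R]
    (M : Type u) [AddCommGroup M] [Module R M]
    (N : Type u) [AddCommGroup N] [Module R N] : Prop :=
  ∀ P : (X : Type u) → [AddCommGroup X] → [Module R X] → Prop,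
    P M →
    (∀ (X : Type u) [AddCommGroup X] [Module R X]
       (Y : Type u) [AddCommGroup Y] [Module R Y],
        (X ≃ₗ[R] Y) → P X → P Y) →
    (∀ (X : Type u) [AddCommGroup X] [Module R X] (L : Submodule R X),
        P X → P L) →
    (∀ (ι : Type u) [Preorder ι] [IsDirected ι (· ≤ ·)] [Nonempty ι]
        [DecidableEq ι]
        (G : ι → Type u) [∀ i, AddCommGroup (G i)] [∀ i, Module R (G i)]
        (f : ∀ i j, i ≤ j → G i →ₗ[R] G j) [DirectedSystem G (f · · ·)],
        (∀ i, P (G i)) → P (Module.DirectLimit G f)) →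
    P N

/-- Over a commutative noetherian ring, a prime `p` is vaguely
associated to a module `M` (i.e. `R/p ∈ SubLim({M})`) iff `p` is associated to
`M` (i.e. `R/p` embeds into `M`). -/
theorem memSubLim_quotient_prime_iff_assoc (R : Type u) [CommRing R]
    [IsNoetherianRing R] (M : Type u) [AddCommGroup M] [Module R M]
    (p : Ideal R) (hp : p.IsPrime) :
    MemSubLim R M (R ⧸ p) ↔ ∃ φ : (R ⧸ p) →ₗ[R] M, Function.Injective φ := by
  constructor
  · intro h
    have key := h (fun X _ _ =>
        (∃ ψ : (R ⧸ p) →ₗ[R] X, Function.Injective ψ) →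
          ∃ φ : (R ⧸ p) →ₗ[R] M, Function.Injective φ)
      (fun hψ => hψ)
      (fun X _ _ Y _ _ e hX ⟨ψ, hψ⟩ =>
        hX ⟨(e.symm : Y →ₗ[R] X).comp ψ, e.symm.injective.comp hψ⟩)
      (fun X _ _ L hX ⟨ψ, hψ⟩ =>
        hX ⟨L.subtype.comp ψ, Subtype.val_injective.comp hψ⟩)
      ?_
    · exact key ⟨LinearMap.id, fun a b hab => hab⟩
    · intro ι _ _ _ _ G _ _ f _ hG ⟨ψ, hψ⟩
      -- the image of 1 comes from some component
      obtain ⟨i, g, hg⟩ := Module.DirectLimit.exists_of (ψ (Submodule.Quotient.mk 1))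
      -- p is finitely generated
      obtain ⟨s, hs⟩ := (IsNoetherian.noetherian p : p.FG)
      -- each generator kills g eventually
      have hkill : ∀ a ∈ s, ∃ j hij, f i j hij (a • g) = 0 := by
        intro a ha
        apply Module.DirectLimit.of.zero_exact
        have : a ∈ p := by rw [← hs]; exact Submodule.subset_span ha
        calc Module.DirectLimit.of R ι G f i (a • g)
            = a • Module.DirectLimit.of R ι G f i g := by rw [map_smul]
          _ = a • ψ (Submodule.Quotient.mk 1) := by rw [hg]
          _ = ψ (a • Submodule.Quotient.mk 1) := by rw [map_smul]
          _ = ψ (Submodule.Quotient.mk a) := by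
              congr 1
              rw [← Submodule.Quotient.mk_smul, smul_eq_mul, mul_one]
          _ = 0 := by
              rw [show (Submodule.Quotient.mk a : R ⧸ p) = 0 from
                (Submodule.Quotient.mk_eq_zero p).2 this, map_zero]
      choose jmap hjle hjzero using hkill
      -- take a common upper bound
      have hex := Finset.exists_le (insert i (s.attach.image (fun a : {x // x ∈ s} => jmap a.1 a.2)))
      obtain ⟨k, hk⟩ := hex
      have hik : i ≤ k := hk i (Finset.mem_insert_self _ _)
      set g' : G k := f i k hik g with hg'
      have hann : ∀ a ∈ p, a • g' = 0 := by
        have hkills : ∀ a ∈ s, a • g' = 0 := by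
          intro a ha
          have hjk : jmap a ha ≤ k := hk _ (Finset.mem_insert_of_mem
            (Finset.mem_image.2 ⟨⟨a, ha⟩, Finset.mem_attach _ _, rfl⟩))
          have h2 : f i k hik (a • g) =
              f (jmap a ha) k hjk (f i (jmap a ha) (hjle a ha) (a • g)) :=
            (Module.DirectedSystem.map_map (f := f) (hjle a ha) hjk (a • g)).symm
          have h0 : a • g' = f i k hik (a • g) := (map_smul (f i k hik) a g).symm
          rw [h0, h2, hjzero a ha, map_zero]
        intro a hap
        rw [← hs] at hap
        induction hap using Submodule.span_induction with
        | mem x hx => exact hkills x hx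
        | zero => rw [zero_smul]
        | add x y _ _ hx hy => rw [add_smul, hx, hy, add_zero]
        | smul r x _ hx => rw [smul_eq_mul, mul_smul, hx, smul_zero]
      -- define the map R/p → G k
      have hle : p ≤ LinearMap.ker (LinearMap.toSpanSingleton R (G k) g') := by
        intro a ha
        simpa [LinearMap.mem_ker, LinearMap.toSpanSingleton_apply] using hann a ha
      set χ : (R ⧸ p) →ₗ[R] G k :=
        p.liftQ (LinearMap.toSpanSingleton R (G k) g') hle with hχ
      have hcomm : ∀ x : R ⧸ p,
          Module.DirectLimit.of R ι G f k (χ x) = ψ x := by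
        intro x
        obtain ⟨r, rfl⟩ := Submodule.Quotient.mk_surjective p x
        have h1 : χ (Submodule.Quotient.mk r) = r • g' :=
          Submodule.liftQ_apply p (LinearMap.toSpanSingleton R (G k) g') r
        rw [h1, map_smul, hg', Module.DirectLimit.of_f, hg, ← map_smul]
        congr 1
        rw [← Submodule.Quotient.mk_smul, smul_eq_mul, mul_one]
      refine hG k ⟨χ, ?_⟩
      intro x y hxy
      apply hψ
      rw [← hcomm, ← hcomm, hxy]
  · rintro ⟨φ, hφ⟩
    intro P hM hiso hsub hlim
    exact hiso _ _ (LinearEquiv.ofInjective φ hφ).symm (hsub M (LinearMap.range φ) hM)
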